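/- Let 𝔤 be a Lie algebra, 𝔦 an ideal of dimension k, and (𝔦_t) a smooth curve of ideals of 𝔤 with 𝔦₀ = 𝔦, realized by a smooth curve α(t) ∈ GL(𝔤) with α(0) = id and α(t)(𝔦) = 𝔦_t. Then the linear map η: 𝔦 → 𝔤/𝔦 given by η(u) = π(α'(0)(u)) satisfies the 0-cocycle condition: for all x ∈ 𝔤 and u ∈ 𝔦, π([x, α'(0)(u)]) = η([x, u]), i.e. ad^Hom_x(η) = 0 for all x ∈ 𝔤. -/

import Mathlib

set_option maxHeartbeats 2000000 in
set_option synthInstance.maxHeartbeats 400000 in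
/-- Let `(𝔤, β)` be a finite-dimensional real Lie algebra (`β` the Lie bracket, given as a
skew-symmetric bilinear map satisfying the Jacobi identity), `𝔦 ⊆ 𝔤` an ideal, and
`(𝔦_t = α(t)(𝔦))_t` a smooth deformation of `𝔦` through ideals of `𝔤`, realized by a curve
`α(t)` of linear automorphisms with `α(0) = id` and derivative `D = α'(0)` at `0`.
Then `η := π ∘ D|_𝔦 : 𝔦 → 𝔤/𝔦` is a `0`-cocycle: for all `x ∈ 𝔤` and `u ∈ 𝔦`,
`π(β(x, D u)) = η(β(x, u))`, i.e. `ad^Hom_x(η) = 0`. -/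
theorem statement4 {L : Type*} [NormedAddCommGroup L] [NormedSpace ℝ L]
    [FiniteDimensional ℝ L]
    (β : L →ₗ[ℝ] L →ₗ[ℝ] L)
    (hskew : ∀ x y : L, β x y = -β y x)
    (hjac : ∀ x y z : L, β (β x y) z + β (β y z) x + β (β z x) y = 0)
    (I : Submodule ℝ L)
    (hI : ∀ x u : L, u ∈ I → β x u ∈ I)
    (α : ℝ → (L →ₗ[ℝ] L)) (D : L →ₗ[ℝ] L)
    (hα0 : α 0 = LinearMap.id)
    (hbij : ∀ t : ℝ, Function.Bijective (α t))
    (hidealt : ∀ (t : ℝ) (x y : L), y ∈ I.map (α t) → β x y ∈ I.map (α t))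
    (hderiv : ∀ u : L, HasDerivAt (fun t : ℝ => α t u) (D u) 0) :
    ∀ x u : L, u ∈ I →
      (Submodule.Quotient.mk (β x (D u)) : L ⧸ I) = Submodule.Quotient.mk (D (β x u)) := by
  intro x u hu
  classical
  let b := Module.finBasis ℝ L
  -- continuous linear map versions
  let A : ℝ → (L →L[ℝ] L) := fun t => LinearMap.toContinuousLinearMap (α t)
  let Dc : L →L[ℝ] L := LinearMap.toContinuousLinearMap D
  -- the equivalence via basis coordinates
  let E : (Fin (Module.finrank ℝ L) → L) ≃L[ℝ] (L →L[ℝ] L) :=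
    LinearEquiv.toContinuousLinearEquiv
      ((b.constr ℝ).trans LinearMap.toContinuousLinearMap)
  have hAE : ∀ (f : L →ₗ[ℝ] L), E (fun i => f (b i)) = LinearMap.toContinuousLinearMap f := by
    intro f
    show LinearMap.toContinuousLinearMap ((b.constr ℝ) fun i => f (b i)) = _
    congr 1
    exact b.ext fun i => by simp
  -- the curve A is differentiable at 0 with derivative Dc
  have hA : HasDerivAt A Dc 0 := by
    have h1 : HasDerivAt (fun t : ℝ => (fun i => α t (b i))) (fun i => D (b i)) 0 :=
      hasDerivAt_pi.2 fun i => hderiv (b i)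
    have h2 := (E.toContinuousLinearMap.hasFDerivAt.comp_hasDerivAt 0 h1)
    have : HasDerivAt (fun t : ℝ => E (fun i => α t (b i))) (E (fun i => D (b i))) 0 := h2
    rw [hAE] at this
    refine this.congr_deriv ?_ |>.congr_of_eventuallyEq ?_
    · rfl
    · exact Filter.Eventually.of_forall fun t => (hAE (α t)).symm
  -- units
  have key : ∀ t : ℝ, ∃ ut : (L →L[ℝ] L)ˣ, (ut : L →L[ℝ] L) = A t := by
    intro t
    let eα : L ≃L[ℝ] L :=
      LinearEquiv.toContinuousLinearEquiv (LinearEquiv.ofBijective (α t) (hbij t))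
    refine ⟨⟨A t, (eα.symm : L →L[ℝ] L), ?_, ?_⟩, rfl⟩
    · ext v
      simp [A, eα, ContinuousLinearMap.mul_apply]
    · ext v
      simp [A, eα, ContinuousLinearMap.mul_apply]
  choose ut hut using key
  have hut0 : ut 0 = 1 := by
    apply Units.ext
    rw [hut]
    ext v
    simp [A, hα0]
  -- derivative of inverse curve
  have hB : HasDerivAt (fun t => Ring.inverse (A t)) (-Dc) 0 := by
    have hinv : HasFDerivAt Ring.inverse
        (-((ContinuousLinearMap.mulLeftRight ℝ (L →L[ℝ] L)) ↑(ut 0)⁻¹) ↑(ut 0)⁻¹) (A 0) :=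
      by rw [← hut 0]; exact hasFDerivAt_ringInverse (𝕜 := ℝ) (ut 0)
    have h := hinv.comp_hasDerivAt 0 hA
    simpa [hut0, Function.comp_def] using h
  -- derivative of g t = β x (α t u)
  have hg : HasDerivAt (fun t => β x (α t u)) (β x (D u)) 0 := by
    have := (LinearMap.toContinuousLinearMap (β x)).hasFDerivAt.comp_hasDerivAt 0 (hderiv u)
    simpa [Function.comp_def] using this
  -- the curve f
  have hf : HasDerivAt (fun t => Ring.inverse (A t) (β x (α t u)))
      ((-Dc) (β x (α 0 u)) + (Ring.inverse (A 0)) (β x (D u))) 0 := hB.clm_apply hg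
  have hA0 : Ring.inverse (A 0) = 1 := by
    rw [← hut 0, Ring.inverse_unit, hut0]; simp
  -- membership of the curve in I
  have hmem : ∀ t : ℝ, Ring.inverse (A t) (β x (α t u)) ∈ I := by
    intro t
    have h1 : β x (α t u) ∈ I.map (α t) :=
      hidealt t x _ (Submodule.mem_map_of_mem hu)
    obtain ⟨v, hv, hvt⟩ := h1
    rw [← hvt, ← hut t, Ring.inverse_unit]
    have : (Units.val (ut t)⁻¹) (α t v) = ((Units.val (ut t)⁻¹) * (ut t : L →L[ℝ] L)) v := by
      rw [ContinuousLinearMap.mul_apply, hut t]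
      simp [A]
    rw [this, ← Units.val_mul]
    simpa using hv
  -- derivative lies in I since I is closed
  have hclosed : IsClosed (I : Set L) := Submodule.closed_of_finiteDimensional I
  have hderivmem : (-Dc) (β x (α 0 u)) + (Ring.inverse (A 0)) (β x (D u)) ∈ I := by
    rw [hasDerivAt_iff_tendsto_slope] at hf
    refine hclosed.mem_of_tendsto hf (Filter.Eventually.of_forall fun t => ?_)
    rw [slope_def_module]
    exact I.smul_mem _ (I.sub_mem (hmem t) (hmem 0))
  rw [hA0, hα0] at hderivmem
  simp only [LinearMap.id_apply, ContinuousLinearMap.neg_apply, ContinuousLinearMap.one_apply] at hderivmem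
  have hDc : Dc (β x u) = D (β x u) := rfl
  rw [hDc] at hderivmem
  rw [Submodule.Quotient.eq]
  have : β x (D u) - D (β x u) = -(Dc (β x u)) + β x (D u) := by
    rw [hDc]; abel
  rw [this]
  exact hderivmem
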